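/- arXiv:1403.4654 — 2 statements merged into one kernel-verified Lean document; each statement's English description precedes it below -/
import Mathlib

section
/- For any C > 0, the function v_C(a,t) = a/C + (t/C)(4π − 1/C)(1 − exp(−C a / t)) satisfies the PDE v_t = v·v'' − (v')² + 4π·v' for all a > 0, t > 0, where primes denote partial derivatives in a. -/
open Real

lemma expInner_a (C t : ℝ) (x : ℝ) :
    HasDerivAt (fun x : ℝ => Real.exp (-C * x / t)) (Real.exp (-C * x / t) * (-C / t)) x := by
  have h1 : HasDerivAt (fun x : ℝ => -C * x / t) (-C / t) x := by
    simpa using ((hasDerivAt_id x).const_mul (-C)).div_const t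
  exact h1.exp

lemma dA (C t K : ℝ) (x : ℝ) :
    HasDerivAt (fun x : ℝ => x / C + (t / C) * K * (1 - Real.exp (-C * x / t)))
      (1 / C + (t / C) * K * (0 - Real.exp (-C * x / t) * (-C / t))) x := by
  have h1 : HasDerivAt (fun x : ℝ => x / C) (1 / C) x := by
    simpa using (hasDerivAt_id x).div_const C
  exact h1.add (((hasDerivAt_const x (1:ℝ)).sub (expInner_a C t x)).const_mul ((t / C) * K))

/-- The function v_C(a,t) = a/C + (t/C)(4π − 1/C)(1 − exp(−Ca/t)) satisfies
v_t = v v'' − (v')² + 4π v' for a > 0, t > 0 (primes are ∂_a). -/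
theorem vC_solves_pde (C : ℝ) (hC : 0 < C)
    (v : ℝ → ℝ → ℝ)
    (hv : v = fun a t => a / C + (t / C) * (4 * π - 1 / C) * (1 - exp (-C * a / t))) :
    ∀ a t : ℝ, 0 < a → 0 < t →
      deriv (fun s => v a s) t
        = v a t * deriv (deriv (fun x => v x t)) a
          - (deriv (fun x => v x t) a) ^ 2
          + 4 * π * deriv (fun x => v x t) a := by
  intro a t ha ht
  have ht' : t ≠ 0 := ne_of_gt ht
  have hC' : C ≠ 0 := ne_of_gt hC
  subst hv
  -- first a-derivative as a function
  have hda : deriv (fun x => (fun a t => a / C + (t / C) * (4 * π - 1 / C) * (1 - Real.exp (-C * a / t))) x t)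
      = fun x => 1 / C + (4 * π - 1 / C) * Real.exp (-C * x / t) := by
    funext x
    rw [(dA C t (4 * π - 1 / C) x).deriv]
    field_simp
    ring
  -- time derivative
  have h0 : HasDerivAt (fun s : ℝ => -C * a / s) (C * a / t ^ 2) t := by
    have h := (hasDerivAt_const t (-C * a)).div (hasDerivAt_id t) ht'
    refine h.congr_deriv ?_
    simp only [id]
    ring
  have hdt : HasDerivAt
      (fun s => (fun a t => a / C + (t / C) * (4 * π - 1 / C) * (1 - Real.exp (-C * a / t))) a s)
      (0 + ((1 / C * (4 * π - 1 / C)) * (1 - Real.exp (-C * a / t))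
        + (t / C) * (4 * π - 1 / C) * (0 - Real.exp (-C * a / t) * (C * a / t ^ 2)))) t := by
    have h1 : HasDerivAt (fun s : ℝ => (s / C) * (4 * π - 1 / C)) (1 / C * (4 * π - 1 / C)) t := by
      simpa using ((hasDerivAt_id t).div_const C).mul_const (4 * π - 1 / C)
    have h2 : HasDerivAt (fun s : ℝ => 1 - Real.exp (-C * a / s))
        (0 - Real.exp (-C * a / t) * (C * a / t ^ 2)) t :=
      (hasDerivAt_const t (1:ℝ)).sub h0.exp
    have h3 := h1.mul h2
    exact (hasDerivAt_const t (a / C)).add h3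
  rw [hdt.deriv, hda]
  -- second a-derivative
  have hd2 : HasDerivAt (fun x => 1 / C + (4 * π - 1 / C) * Real.exp (-C * x / t))
      (0 + (4 * π - 1 / C) * (Real.exp (-C * a / t) * (-C / t))) a :=
    (hasDerivAt_const a (1 / C)).add ((expInner_a C t a).const_mul (4 * π - 1 / C))
  rw [hd2.deriv]
  field_simp
  ring
end

section
/- Let C̃(t) = (C₀ − C_crit)·sqrt(b₀)·e^{2(1−g)t}·[((1/b₀) + 1/(1−g))e^{4(1−g)t} − 1/(1−g)]^{−1/2}. Then C̃ satisfies (d/dt) ln C̃(t) = −2b(t), where b(t) = [((1/b₀)+1/(1−g))e^{4(1−g)t} − 1/(1−g)]^{−1}. Moreover, for C(t) = C̃(t) + C_crit with C_crit > 0, one has (d/dt) ln C(t) > −2b(t) for all t ≥ 0. -/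
open Real

private lemma ctilde_aux (m K c Ccrit : ℝ) (hm : m < 0) (hK : 0 < K) (hc : 0 < c)
    (hCc : 0 < Ccrit) (t : ℝ) :
    (deriv (fun s => Real.log (c * exp (2 * m * s)
        * (K * exp (4 * m * s) - 1 / m) ^ (-(1:ℝ)/2))) t
      = -2 * (K * exp (4 * m * t) - 1 / m)⁻¹)
    ∧ (-2 * (K * exp (4 * m * t) - 1 / m)⁻¹
      < deriv (fun s => Real.log (c * exp (2 * m * s)
          * (K * exp (4 * m * s) - 1 / m) ^ (-(1:ℝ)/2) + Ccrit)) t) := by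
  have hm' : m ≠ 0 := ne_of_lt hm
  have hE : ∀ s : ℝ, 0 < K * exp (4 * m * s) - 1 / m := by
    intro s
    have h1 : 0 < K * exp (4 * m * s) := by positivity
    have h2 : 1 / m < 0 := one_div_neg.mpr hm
    linarith
  have hEd : ∀ u : ℝ, HasDerivAt (fun s => K * exp (4 * m * s) - 1 / m)
      (K * (4 * m) * exp (4 * m * u)) u := by
    intro u
    have h1 : HasDerivAt (fun s : ℝ => 4 * m * s) (4 * m) u := by
      simpa using (hasDerivAt_id u).const_mul (4 * m)
    have := ((h1.exp).const_mul K).sub_const (1 / m)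
    exact this.congr_deriv (by ring)
  have hEt := hE t
  have hEt' : K * exp (4 * m * t) - 1 / m ≠ 0 := ne_of_gt hEt
  have hexp : (0:ℝ) < exp (4 * m * t) := Real.exp_pos _
  have h1 : m * m⁻¹ = 1 := mul_inv_cancel₀ hm'
  have h2 : (K * exp (4 * m * t) - 1 / m) * (K * exp (4 * m * t) - 1 / m)⁻¹ = 1 :=
    mul_inv_cancel₀ hEt'
  constructor
  · have hlog : (fun s => Real.log (c * exp (2 * m * s)
        * (K * exp (4 * m * s) - 1 / m) ^ (-(1:ℝ)/2)))
        = fun s => Real.log c + 2 * m * s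
          + (-(1:ℝ)/2) * Real.log (K * exp (4 * m * s) - 1 / m) := by
      funext s
      rw [Real.log_mul (by positivity) (ne_of_gt (Real.rpow_pos_of_pos (hE s) _)),
        Real.log_mul (ne_of_gt hc) (exp_ne_zero _),
        Real.log_exp, Real.log_rpow (hE s)]
    rw [hlog]
    have H : HasDerivAt (fun s => Real.log c + 2 * m * s
          + (-(1:ℝ)/2) * Real.log (K * exp (4 * m * s) - 1 / m))
        (2 * m + (-(1:ℝ)/2) * ((K * (4 * m) * exp (4 * m * t))
            / (K * exp (4 * m * t) - 1 / m))) t := by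
      have h1 : HasDerivAt (fun s : ℝ => Real.log c + 2 * m * s) (2 * m) t := by
        simpa using ((hasDerivAt_id t).const_mul (2 * m))
      exact h1.add (((hEd t).log hEt').const_mul (-(1:ℝ)/2))
    rw [H.deriv]
    linear_combination (-2 * m) * h2 + (-2 * (K * exp (4 * m * t) - 1 / m)⁻¹) * h1
  · have hP : 0 < (K * exp (4 * m * t) - 1 / m) ^ (-(1:ℝ)/2) :=
      Real.rpow_pos_of_pos hEt _
    have hCtpos : 0 < c * exp (2 * m * t) * (K * exp (4 * m * t) - 1 / m) ^ (-(1:ℝ)/2) := by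
      positivity
    have H1 : HasDerivAt (fun s : ℝ => c * exp (2 * m * s))
        (c * (2 * m) * exp (2 * m * t)) t := by
      have h1 : HasDerivAt (fun s : ℝ => 2 * m * s) (2 * m) t := by
        simpa using (hasDerivAt_id t).const_mul (2 * m)
      have := (h1.exp).const_mul c
      exact this.congr_deriv (by ring)
    have H2 : HasDerivAt (fun s : ℝ => (K * exp (4 * m * s) - 1 / m) ^ (-(1:ℝ)/2))
        ((K * (4 * m) * exp (4 * m * t)) * (-(1:ℝ)/2)
          * (K * exp (4 * m * t) - 1 / m) ^ (-(1:ℝ)/2 - 1)) t :=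
      (hEd t).rpow_const (Or.inl hEt')
    have H : HasDerivAt (fun s : ℝ => c * exp (2 * m * s) * (K * exp (4 * m * s) - 1 / m) ^ (-(1:ℝ)/2)) _ t := H1.mul H2
    have Hlog := (H.add_const Ccrit).log (by positivity)
    rw [Hlog.deriv]
    have hkey : c * (2 * m) * exp (2 * m * t) * (K * exp (4 * m * t) - 1 / m) ^ (-(1:ℝ)/2)
        + c * exp (2 * m * t) * ((K * (4 * m) * exp (4 * m * t)) * (-(1:ℝ)/2)
            * (K * exp (4 * m * t) - 1 / m) ^ (-(1:ℝ)/2 - 1))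
        = (-2 * (K * exp (4 * m * t) - 1 / m)⁻¹)
          * (c * exp (2 * m * t) * (K * exp (4 * m * t) - 1 / m) ^ (-(1:ℝ)/2)) := by
      have hsub : (K * exp (4 * m * t) - 1 / m) ^ (-(1:ℝ)/2 - 1)
          = (K * exp (4 * m * t) - 1 / m) ^ (-(1:ℝ)/2) / (K * exp (4 * m * t) - 1 / m) := by
        rw [Real.rpow_sub hEt, Real.rpow_one]
      rw [hsub]
      linear_combination
        (-2 * m * (c * exp (2 * m * t) * (K * exp (4 * m * t) - 1 / m) ^ (-(1:ℝ)/2))) * h2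
        + (-2 * (K * exp (4 * m * t) - 1 / m)⁻¹
            * (c * exp (2 * m * t) * (K * exp (4 * m * t) - 1 / m) ^ (-(1:ℝ)/2))) * h1
    rw [hkey]
    set Cv := c * exp (2 * m * t) * (K * exp (4 * m * t) - 1 / m) ^ (-(1:ℝ)/2) with hCv
    have hb' : (0:ℝ) < (K * exp (4 * m * t) - 1 / m)⁻¹ := inv_pos.mpr hEt
    have hfrac : Cv / (Cv + Ccrit) < 1 :=
      (div_lt_one (by linarith)).mpr (by linarith)
    have hre : -2 * (K * exp (4 * m * t) - 1 / m)⁻¹ * Cv / (Cv + Ccrit)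
        = (-2 * (K * exp (4 * m * t) - 1 / m)⁻¹) * (Cv / (Cv + Ccrit)) := by ring
    rw [hre]
    nlinarith [mul_pos hb' (sub_pos.mpr hfrac)]

/-- C̃ satisfies (ln C̃)' = −2b, and C = C̃ + C_crit satisfies (ln C)' > −2b on [0,∞). -/
theorem Ctilde_log_deriv (g : ℤ) (hg : 2 ≤ g) (b₀ C₀ : ℝ)
    (hb₀ : 0 < b₀) (hb₀' : b₀ < (g : ℝ) - 1)
    (Ccrit : ℝ) (hCcrit : Ccrit = ((g : ℝ) - 1) / (2 * π))
    (hC₀ : Ccrit < C₀)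
    (b : ℝ → ℝ)
    (hb : b = fun t =>
      ((1 / b₀ + 1 / (1 - (g : ℝ))) * exp (4 * (1 - (g : ℝ)) * t)
        - 1 / (1 - (g : ℝ)))⁻¹)
    (Ct : ℝ → ℝ)
    (hCt : Ct = fun t => (C₀ - Ccrit) * Real.sqrt b₀ * exp (2 * (1 - (g : ℝ)) * t)
      * ((1 / b₀ + 1 / (1 - (g : ℝ))) * exp (4 * (1 - (g : ℝ)) * t)
          - 1 / (1 - (g : ℝ))) ^ (-(1:ℝ)/2)) :
    (∀ t : ℝ, 0 ≤ t → deriv (fun s => Real.log (Ct s)) t = -2 * b t)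
    ∧ (∀ t : ℝ, 0 ≤ t → -2 * b t < deriv (fun s => Real.log (Ct s + Ccrit)) t) := by
  subst hb hCt
  have hg' : (2:ℝ) ≤ (g:ℝ) := by exact_mod_cast hg
  have hm : (1 - (g:ℝ)) < 0 := by linarith
  have hCc : 0 < Ccrit := by
    rw [hCcrit]
    have : (0:ℝ) < (g:ℝ) - 1 := by linarith
    positivity
  have hc : 0 < (C₀ - Ccrit) * Real.sqrt b₀ := by
    have := Real.sqrt_pos.mpr hb₀
    nlinarith
  have hK : 0 < 1 / b₀ + 1 / (1 - (g:ℝ)) := by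
    have h1 : 1 / ((g:ℝ) - 1) < 1 / b₀ := one_div_lt_one_div_of_lt hb₀ hb₀'
    have h2 : 1 / (1 - (g:ℝ)) = -(1 / ((g:ℝ) - 1)) := by
      rw [show (1:ℝ) - (g:ℝ) = -((g:ℝ) - 1) by ring, div_neg]
    rw [h2]; linarith
  have haux := fun t => ctilde_aux (1 - (g:ℝ)) (1 / b₀ + 1 / (1 - (g:ℝ)))
    ((C₀ - Ccrit) * Real.sqrt b₀) Ccrit hm hK hc hCc t
  exact ⟨fun t _ => (haux t).1, fun t _ => (haux t).2⟩
end
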